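/- Let k be a positive natural number, Δ > 0, ρ > 0, and let v, v' : Fin k → ℝ satisfy ∑ i, |v i − v' i| ≤ Δ (ℓ1-sensitivity at most Δ). Set σ² = Δ²/(2ρ), and let μ and ν be the product measures on Fin k → ℝ whose i-th coordinates are the Gaussian measures with means v i and v' i respectively and common variance σ². Then μ ≪ ν and for every λ > 1, ∫⁻ (μ.rnDeriv ν)^λ dν ≤ exp(λ · (λ − 1) · ρ); that is, the Rényi divergence of order λ between μ and ν is at most λρ for every λ ∈ (1, ∞). (Gaussian mechanism: adding independent Gaussian noise of variance Δ²/(2ρ) to each coordinate of a statistic with ℓ1-sensitivity Δ satisfies ρ-zero-concentrated differential privacy.) -/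

import Mathlib

open MeasureTheory ProbabilityTheory Real
open scoped ENNReal NNReal

lemma lintegral_pi_prod : ∀ {n : ℕ} (μ : Fin n → Measure ℝ) [∀ i, SigmaFinite (μ i)]
    (f : Fin n → ℝ → ℝ≥0∞), (∀ i, Measurable (f i)) →
    ∫⁻ x, ∏ i, f i (x i) ∂Measure.pi μ = ∏ i, ∫⁻ y, f i y ∂μ i := by
  intro n
  induction n with
  | zero => intro μ _ f hf; simp [lintegral_const, Measure.pi_univ]
  | succ n ih =>
    intro μ _ f hf
    have h := (measurePreserving_piFinSuccAbove μ 0).symm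
    have hF : Measurable fun x : Fin (n+1) → ℝ => ∏ i, f i (x i) :=
      Finset.measurable_prod _ fun i _ => (hf i).comp (measurable_pi_apply i)
    rw [← h.lintegral_comp hF]
    have heq : ∀ y : ℝ × (Fin n → ℝ),
        (∏ i, f i (((MeasurableEquiv.piFinSuccAbove (fun _ => ℝ) 0).symm y) i))
          = f 0 y.1 * ∏ j, f j.succ (y.2 j) := by
      intro y
      rw [Fin.prod_univ_succ]
      have h0 : ((MeasurableEquiv.piFinSuccAbove (fun _ : Fin (n+1) => ℝ) 0).symm y) 0 = y.1 := by
        simp [MeasurableEquiv.piFinSuccAbove]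
      have hs : ∀ j : Fin n,
          ((MeasurableEquiv.piFinSuccAbove (fun _ : Fin (n+1) => ℝ) 0).symm y) j.succ = y.2 j := by
        intro j
        simp [MeasurableEquiv.piFinSuccAbove]
      rw [h0]
      exact congrArg _ (Finset.prod_congr rfl fun j _ => by rw [hs j])
    simp_rw [heq]
    have hgm : Measurable (fun z : Fin n → ℝ => ∏ j, f j.succ (z j)) :=
      Finset.measurable_prod _ fun j _ => (hf j.succ).comp (measurable_pi_apply j)
    rw [lintegral_prod_mul (μ := μ 0) (ν := Measure.pi fun j => μ (Fin.succAbove 0 j))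
      ((hf 0).aemeasurable) hgm.aemeasurable]
    rw [ih _ _ (fun j => hf j.succ), Fin.prod_univ_succ]
    simp [Fin.succAbove]

lemma prod_rpow_ennreal {ι : Type*} (s : Finset ι) (f : ι → ℝ≥0∞) {l : ℝ} (hl : 0 ≤ l) :
    (∏ i ∈ s, f i) ^ l = ∏ i ∈ s, f i ^ l := by
  classical
  induction s using Finset.induction with
  | empty => simp [ENNReal.one_rpow]
  | insert a s h ih =>
    rw [Finset.prod_insert h, Finset.prod_insert h, ENNReal.mul_rpow_of_nonneg _ _ hl, ih]

lemma pi_withDensity_eq {n : ℕ} (μ : Fin n → Measure ℝ) [∀ i, SigmaFinite (μ i)]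
    (g : Fin n → ℝ → ℝ≥0∞) (hg : ∀ i, Measurable (g i))
    (hsf : ∀ i, SigmaFinite ((μ i).withDensity (g i))) :
    Measure.pi (fun i => (μ i).withDensity (g i))
      = (Measure.pi μ).withDensity (fun x => ∏ i, g i (x i)) := by
  haveI := hsf
  refine Measure.pi_eq fun s hs => ?_
  rw [withDensity_apply _ (MeasurableSet.univ_pi hs), ← lintegral_indicator
    (MeasurableSet.univ_pi hs) _]
  have hind : ∀ x : Fin n → ℝ, (Set.pi Set.univ s).indicator (fun x => ∏ i, g i (x i)) x
      = ∏ i, (s i).indicator (g i) (x i) := by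
    intro x
    by_cases hx : x ∈ Set.pi Set.univ s
    · rw [Set.indicator_of_mem hx]
      exact Finset.prod_congr rfl fun i _ =>
        (Set.indicator_of_mem (hx i (Set.mem_univ i)) _).symm
    · rw [Set.indicator_of_notMem hx]
      simp only [Set.mem_pi, Set.mem_univ, forall_true_left] at hx
      push_neg at hx
      obtain ⟨i, hi⟩ := hx
      exact (Finset.prod_eq_zero (Finset.mem_univ i) (Set.indicator_of_notMem hi _)).symm
  simp_rw [hind]
  rw [lintegral_pi_prod μ _ (fun i => (hg i).indicator (hs i))]
  exact Finset.prod_congr rfl fun i _ => by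
    rw [lintegral_indicator (hs i) _, ← withDensity_apply _ (hs i)]

lemma gaussian_density_ratio (m m' : ℝ) {V : ℝ≥0} (hV : V ≠ 0) :
    gaussianReal m V = (gaussianReal m' V).withDensity
      (fun y => gaussianPDF m V y / gaussianPDF m' V y) := by
  rw [gaussianReal_of_var_ne_zero _ hV, gaussianReal_of_var_ne_zero _ hV,
    show (fun y => gaussianPDF m V y / gaussianPDF m' V y) = gaussianPDF m V / gaussianPDF m' V from rfl,
    ← withDensity_mul _ (measurable_gaussianPDF _ _)
      ((measurable_gaussianPDF _ _).div (measurable_gaussianPDF _ _))]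
  congr 1
  funext y
  simp only [Pi.mul_apply]
  exact (ENNReal.mul_div_cancel (gaussianPDF_pos _ hV _).ne' ENNReal.ofReal_ne_top).symm

lemma gaussian_renyi_integral (m m' : ℝ) {V : ℝ≥0} (hV : V ≠ 0) (l : ℝ) :
    ∫⁻ y, (gaussianPDF m V y / gaussianPDF m' V y) ^ l ∂(gaussianReal m' V)
      = ENNReal.ofReal (rexp (l * (l - 1) * ((m - m') ^ 2 / (2 * (V : ℝ))))) := by
  have hVpos : (0 : ℝ) < V := lt_of_le_of_ne V.coe_nonneg (by exact_mod_cast hV.symm)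
  have hreal : ∀ y : ℝ,
      gaussianPDFReal m' V y * (gaussianPDFReal m V y / gaussianPDFReal m' V y) ^ l
        = rexp (l * (l - 1) * ((m - m') ^ 2 / (2 * (V : ℝ))))
            * gaussianPDFReal (m' + l * (m - m')) V y := by
    intro y
    simp only [gaussianPDFReal]
    have hc : ((√(2 * π * (V : ℝ)))⁻¹ : ℝ) ≠ 0 := by positivity
    rw [mul_div_mul_left _ _ hc, ← Real.exp_sub, ← Real.exp_mul, mul_assoc, ← Real.exp_add]
    rw [show rexp (l * (l - 1) * ((m - m') ^ 2 / (2 * (V : ℝ))))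
          * ((√(2 * π * (V : ℝ)))⁻¹ * rexp (-(y - (m' + l * (m - m'))) ^ 2 / (2 * (V : ℝ))))
        = (√(2 * π * (V : ℝ)))⁻¹ * rexp (l * (l - 1) * ((m - m') ^ 2 / (2 * (V : ℝ)))
            + -(y - (m' + l * (m - m'))) ^ 2 / (2 * (V : ℝ))) by rw [Real.exp_add]; ring]
    congr 1
    have h2V : (2 : ℝ) * V ≠ 0 := by positivity
    field_simp
    ring
  rw [gaussianReal_of_var_ne_zero _ hV,
    lintegral_withDensity_eq_lintegral_mul _ (measurable_gaussianPDF _ _)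
      (g := fun y => (gaussianPDF m V y / gaussianPDF m' V y) ^ l)
      (((measurable_gaussianPDF _ _).div (measurable_gaussianPDF _ _)).pow_const _)]
  have key : ∀ y : ℝ,
      (gaussianPDF m' V * fun y => (gaussianPDF m V y / gaussianPDF m' V y) ^ l) y
        = ENNReal.ofReal (rexp (l * (l - 1) * ((m - m') ^ 2 / (2 * (V : ℝ))))
            * gaussianPDFReal (m' + l * (m - m')) V y) := by
    intro y
    simp only [Pi.mul_apply, gaussianPDF]
    rw [← ENNReal.ofReal_div_of_pos (gaussianPDFReal_pos _ _ _ hV),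
      ENNReal.ofReal_rpow_of_pos (div_pos (gaussianPDFReal_pos _ _ _ hV) (gaussianPDFReal_pos _ _ _ hV)), ← ENNReal.ofReal_mul
        (gaussianPDFReal_nonneg _ _ _), hreal y]
  simp_rw [key, ENNReal.ofReal_mul (Real.exp_pos _).le]
  rw [lintegral_const_mul _ ((measurable_gaussianPDFReal _ _).ennreal_ofReal),
    lintegral_gaussianPDFReal_eq_one _ hV, mul_one]

/-- Gaussian mechanism: adding independent Gaussian noise of variance `Δ²/(2ρ)` to each
coordinate of a statistic with ℓ1-sensitivity at most `Δ` satisfies `ρ`-zero-concentrated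
differential privacy, i.e. the Rényi divergence of order `l` between the two output
distributions is at most `l · ρ` for every `l ∈ (1, ∞)`. -/
theorem gaussian_mechanism (k : ℕ) (hk : 0 < k) (Δ ρ : ℝ) (hΔ : 0 < Δ) (hρ : 0 < ρ)
    (v v' : Fin k → ℝ) (hsens : ∑ i, |v i - v' i| ≤ Δ)
    (μ ν : Measure (Fin k → ℝ))
    (hμ : μ = Measure.pi fun i => gaussianReal (v i) ((Δ ^ 2 / (2 * ρ)).toNNReal))
    (hν : ν = Measure.pi fun i => gaussianReal (v' i) ((Δ ^ 2 / (2 * ρ)).toNNReal)) :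
    μ ≪ ν ∧ ∀ l : ℝ, 1 < l →
      ∫⁻ x, (μ.rnDeriv ν x) ^ l ∂ν ≤ ENNReal.ofReal (Real.exp (l * (l - 1) * ρ)) := by
  set V : ℝ≥0 := (Δ ^ 2 / (2 * ρ)).toNNReal with hVdef
  have hV2pos : (0 : ℝ) < Δ ^ 2 / (2 * ρ) := by positivity
  have hVc : (V : ℝ) = Δ ^ 2 / (2 * ρ) := Real.coe_toNNReal _ hV2pos.le
  have hVpos : (0 : ℝ) < V := by rw [hVc]; exact hV2pos
  have hV : V ≠ 0 := by
    intro h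
    rw [h] at hVpos
    simp at hVpos
  set g : Fin k → ℝ → ℝ≥0∞ :=
    fun i y => gaussianPDF (v i) V y / gaussianPDF (v' i) V y with hgdef
  have hgm : ∀ i, Measurable (g i) :=
    fun i => (measurable_gaussianPDF _ _).div (measurable_gaussianPDF _ _)
  have hcomp : ∀ i, gaussianReal (v i) V = (gaussianReal (v' i) V).withDensity (g i) :=
    fun i => gaussian_density_ratio _ _ hV
  have hμν : μ = ν.withDensity (fun x => ∏ i, g i (x i)) := by
    rw [hμ, hν]
    calc Measure.pi (fun i => gaussianReal (v i) V)
        = Measure.pi (fun i => (gaussianReal (v' i) V).withDensity (g i)) := by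
          congr 1; funext i; exact hcomp i
      _ = (Measure.pi fun i => gaussianReal (v' i) V).withDensity (fun x => ∏ i, g i (x i)) :=
          pi_withDensity_eq _ _ hgm (fun i => by rw [← hcomp i]; infer_instance)
  have hFm : Measurable (fun x : Fin k → ℝ => ∏ i, g i (x i)) :=
    Finset.measurable_prod _ fun i _ => (hgm i).comp (measurable_pi_apply i)
  refine ⟨by rw [hμν]; exact withDensity_absolutelyContinuous _ _, fun l hl => ?_⟩
  haveI : SigmaFinite ν := by rw [hν]; infer_instance
  have hrn : μ.rnDeriv ν =ᵐ[ν] fun x => ∏ i, g i (x i) := by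
    rw [hμν]; exact Measure.rnDeriv_withDensity ν hFm
  have h1 : ∫⁻ x, (μ.rnDeriv ν x) ^ l ∂ν = ∫⁻ x, (∏ i, g i (x i)) ^ l ∂ν :=
    lintegral_congr_ae (hrn.mono fun x hx => by dsimp only; rw [hx])
  rw [h1]
  have h2 : ∀ x : Fin k → ℝ, (∏ i, g i (x i)) ^ l = ∏ i, (g i (x i)) ^ l :=
    fun x => prod_rpow_ennreal _ _ (by linarith)
  simp_rw [h2]
  rw [hν, lintegral_pi_prod _ _ (fun i => (hgm i).pow_const l)]
  have h3 : ∀ i, ∫⁻ y, (g i y) ^ l ∂gaussianReal (v' i) V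
      = ENNReal.ofReal (rexp (l * (l - 1) * ((v i - v' i) ^ 2 / (2 * (V : ℝ))))) :=
    fun i => gaussian_renyi_integral _ _ hV l
  calc ∏ i, ∫⁻ y, (g i y) ^ l ∂gaussianReal (v' i) V
      = ∏ i, ENNReal.ofReal (rexp (l * (l - 1) * ((v i - v' i) ^ 2 / (2 * (V : ℝ))))) :=
        Finset.prod_congr rfl fun i _ => h3 i
    _ = ENNReal.ofReal (∏ i, rexp (l * (l - 1) * ((v i - v' i) ^ 2 / (2 * (V : ℝ))))) :=
        (ENNReal.ofReal_prod_of_nonneg fun i _ => (Real.exp_pos _).le).symm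
    _ = ENNReal.ofReal (rexp (∑ i, l * (l - 1) * ((v i - v' i) ^ 2 / (2 * (V : ℝ))))) := by
        rw [Real.exp_sum]
    _ ≤ ENNReal.ofReal (rexp (l * (l - 1) * ρ)) := by
        apply ENNReal.ofReal_le_ofReal
        apply Real.exp_le_exp.mpr
        rw [← Finset.mul_sum]
        refine mul_le_mul_of_nonneg_left ?_ (by nlinarith : (0 : ℝ) ≤ l * (l - 1))
        rw [← Finset.sum_div, div_le_iff₀ (by positivity : (0 : ℝ) < 2 * (V : ℝ))]
        have hsum : ∑ i, (v i - v' i) ^ 2 ≤ Δ ^ 2 :=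
          calc ∑ i, (v i - v' i) ^ 2 = ∑ i, |v i - v' i| ^ 2 := by simp [sq_abs]
            _ ≤ (∑ i, |v i - v' i|) ^ 2 :=
                Finset.sum_sq_le_sq_sum_of_nonneg fun i _ => abs_nonneg _
            _ ≤ Δ ^ 2 :=
                pow_le_pow_left₀ (Finset.sum_nonneg fun i _ => abs_nonneg _) hsens 2
        calc ∑ i, (v i - v' i) ^ 2 ≤ Δ ^ 2 := hsum
          _ = ρ * (2 * (V : ℝ)) := by rw [hVc]; field_simp
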